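/- Let n be an even integer with n ≥ 2, let σ ∈ Perm(ZMod n) be the n-cycle σ(i) = i + 1, and let a, b be distinct elements of ZMod n. If the transposition t = swap a b commutes with all of its conjugates σ^j · t · σ^{−j} for every integer j, then b − a = n/2 in ZMod n (so t is conjugate under a power of σ to the transposition (0, n/2)). -/

import Mathlib

/-- Let `n` be even, `n ≥ 2`, let `σ ∈ Perm (ZMod n)` be the `n`-cycle `σ(i) = i + 1`,
and let `a ≠ b` in `ZMod n`.  If the transposition `t = swap a b` commutes with all its
conjugates `σ^j · t · σ^{−j}` (`j ∈ ℤ`), then `b − a = n/2` in `ZMod n`. -/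
theorem stmt11 (n : ℕ) (hn : 2 ≤ n) (hev : Even n) (a b : ZMod n) (hab : a ≠ b)
    (h : ∀ j : ℤ,
      Commute (Equiv.swap a b)
        ((Equiv.addRight (1 : ZMod n)) ^ j * Equiv.swap a b *
          ((Equiv.addRight (1 : ZMod n)) ^ j)⁻¹)) :
    b - a = ((n / 2 : ℕ) : ZMod n) := by
  haveI : NeZero n := ⟨by omega⟩
  set d : ZMod n := b - a with hd
  -- use j = d.val
  have hj := h ((d.val : ℤ))
  rw [show (Equiv.addRight (1 : ZMod n)) ^ (d.val : ℤ) = Equiv.addRight ((d.val : ℤ) • (1 : ZMod n)) from by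
    rw [zpow_natCast, natCast_zsmul]
    generalize d.val = k
    induction k with
    | zero => ext x; simp
    | succ k ih =>
      rw [pow_succ, ih]; ext x
      simp only [Equiv.Perm.mul_apply, Equiv.coe_addRight, succ_nsmul]; abel] at hj
  have hsmul : ((d.val : ℤ) • (1 : ZMod n)) = d := by
    simp [ZMod.natCast_val, ZMod.intCast_cast]
  rw [hsmul] at hj
  have hconj : Equiv.addRight d * Equiv.swap a b * (Equiv.addRight d)⁻¹ =
      Equiv.swap (a + d) (b + d) :=
    (Equiv.swap_apply_apply (Equiv.addRight d) a b).symm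
  rw [hconj] at hj
  have had : a + d = b := by rw [hd]; ring
  rw [had] at hj
  -- Now hj : Commute (swap a b) (swap b (b+d))
  have hd0 : d ≠ 0 := by
    intro h0
    apply hab
    have := sub_eq_zero.mp (hd ▸ h0)
    exact this.symm
  have hbd : b + d ≠ b := by
    intro h0
    exact hd0 (by linear_combination h0)
  -- key claim: 2 * d = 0
  have h2d : 2 * d = 0 := by
    by_contra h2
    -- then a ≠ b + d
    have habd : a ≠ b + d := by
      intro h0
      apply h2
      linear_combination hd - h0
    -- evaluate commute at a
    have := Equiv.ext_iff.mp hj a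
    simp only [Equiv.Perm.mul_apply] at this
    rw [Equiv.swap_apply_of_ne_of_ne hab habd, Equiv.swap_apply_left,
      Equiv.swap_apply_left] at this
    exact hbd this.symm
  -- from 2d = 0 and d ≠ 0 conclude d = n/2
  obtain ⟨m, hm⟩ := hev
  have hn2 : n = 2 * m := by omega
  have hdvd : n ∣ 2 * d.val := by
    have hc : ((2 * d.val : ℕ) : ZMod n) = 0 := by
      push_cast [ZMod.natCast_val]
      simpa using h2d
    exact (ZMod.natCast_eq_zero_iff _ _).mp hc
  have hlt : d.val < n := ZMod.val_lt d
  have hne0 : d.val ≠ 0 := fun h0 => hd0 ((ZMod.val_eq_zero d).mp h0)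
  have hdm : d.val = m := by
    obtain ⟨k, hk⟩ := hdvd
    have hk2 : k < 2 := by
      by_contra hk2
      push_neg at hk2
      have := Nat.mul_le_mul_left n hk2
      omega
    interval_cases k <;> omega
  have hcast : d = ((d.val : ℕ) : ZMod n) := by simp [ZMod.natCast_val]
  rw [hcast, hdm, hn2]
  congr 1
  omega
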